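/- Let F₂ = ⟨a, b⟩ be the free group of rank 2. In the group F₂ × ℤ = ⟨a, b⟩ × ⟨t⟩, let H = F₂ × {1} (a finitely generated normal subgroup) and let K = ⟨(a, 0), (b, 1)⟩ (a finitely generated subgroup). Then the intersection H ∩ K, which equals the normal closure of a in F₂, is not finitely generated. Consequently F₂ × ℤ does not have the weakly Howson property. -/

import Mathlib

open LaurentPolynomial Subgroup

namespace F2Howson

abbrev F₂ := FreeGroup (Fin 2)
abbrev Rp := LaurentPolynomial ℤ

/-- The group `ℤ[T,T⁻¹] ⋊ ℤ` -/
@[ext] structure LG where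
  n : ℤ
  p : Rp

noncomputable instance : Mul LG := ⟨fun x y => ⟨x.n + y.n, x.p + T x.n * y.p⟩⟩
noncomputable instance : One LG := ⟨⟨0, 0⟩⟩
noncomputable instance : Inv LG := ⟨fun x => ⟨-x.n, -(T (-x.n) * x.p)⟩⟩

@[simp] lemma LG.mul_n (x y : LG) : (x * y).n = x.n + y.n := rfl
@[simp] lemma LG.mul_p (x y : LG) : (x * y).p = x.p + T x.n * y.p := rfl
@[simp] lemma LG.one_n : (1 : LG).n = 0 := rfl
@[simp] lemma LG.one_p : (1 : LG).p = 0 := rfl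
@[simp] lemma LG.inv_n (x : LG) : x⁻¹.n = -x.n := rfl
@[simp] lemma LG.inv_p (x : LG) : x⁻¹.p = -(T (-x.n) * x.p) := rfl

noncomputable instance : Group LG where
  mul_assoc x y z := by
    refine LG.ext (add_assoc _ _ _) ?_
    show (x.p + T x.n * y.p) + T (x.n + y.n) * z.p
          = x.p + T x.n * (y.p + T y.n * z.p)
    rw [T_add]; ring
  one_mul x := by
    refine LG.ext (zero_add _) ?_
    show 0 + T 0 * x.p = x.p
    rw [T_zero]; ring
  mul_one x := by
    refine LG.ext (add_zero _) ?_
    show x.p + T x.n * 0 = x.p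
    ring
  inv_mul_cancel x := by
    refine LG.ext (neg_add_cancel _) ?_
    show -(T (-x.n) * x.p) + T (-x.n) * x.p = 0
    ring

lemma LG.mul_def (x y : LG) : x * y = ⟨x.n + y.n, x.p + T x.n * y.p⟩ := rfl
lemma LG.one_def : (1 : LG) = ⟨0, 0⟩ := rfl

noncomputable def π : LG →* Multiplicative ℤ where
  toFun x := Multiplicative.ofAdd x.n
  map_one' := rfl
  map_mul' x y := rfl

noncomputable def Φ : F₂ →* LG := FreeGroup.lift (fun i => if i = 0 then ⟨0, 1⟩ else ⟨1, 0⟩)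

noncomputable def σ : F₂ →* Multiplicative ℤ := π.comp Φ

def a : F₂ := FreeGroup.of 0
def b : F₂ := FreeGroup.of 1

lemma Φ_a : Φ a = ⟨0, 1⟩ := by simp [Φ, a]
lemma Φ_b : Φ b = ⟨1, 0⟩ := by simp [Φ, b]
lemma σ_a : σ a = 1 := by simp only [σ, MonoidHom.comp_apply, Φ_a]; rfl
lemma σ_b : σ b = Multiplicative.ofAdd 1 := by simp only [σ, MonoidHom.comp_apply, Φ_b]; rfl

noncomputable def j : Multiplicative ℤ →* LG where
  toFun x := ⟨x.toAdd, 0⟩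
  map_one' := rfl
  map_mul' x y := by ext <;> simp [LG.mul_def]

lemma Φ_b_zpow (m : ℤ) : Φ (b ^ m) = ⟨m, 0⟩ := by
  have : Φ b = j (Multiplicative.ofAdd 1) := by rw [Φ_b]; rfl
  rw [map_zpow, this, ← map_zpow]
  have h2 : (Multiplicative.ofAdd (1 : ℤ)) ^ m = Multiplicative.ofAdd m := by
    rw [← ofAdd_zsmul]; simp
  rw [h2]; rfl

def w (m : ℤ) : F₂ := b ^ m * a * b ^ (-m)

lemma Φ_w (m : ℤ) : Φ (w m) = ⟨0, T m⟩ := by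
  simp only [w, map_mul, Φ_b_zpow, Φ_a]
  ext <;> simp [LG.mul_def]

lemma w_mem (m : ℤ) : w m ∈ σ.ker := by
  have : σ (w m) = Multiplicative.ofAdd ((Φ (w m)).n) := rfl
  rw [MonoidHom.mem_ker, this, Φ_w]
  rfl

lemma n_eq_zero {g : F₂} (hg : g ∈ σ.ker) : (Φ g).n = 0 := by
  have : Multiplicative.ofAdd (Φ g).n = 1 := hg
  simpa using congrArg Multiplicative.toAdd this

/-- On the kernel of σ, the second coordinate of Φ is a homomorphism. -/
noncomputable def d : σ.ker →* Multiplicative Rp where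
  toFun g := Multiplicative.ofAdd (Φ (g : F₂)).p
  map_one' := by
    show Multiplicative.ofAdd (Φ 1).p = 1
    rw [map_one]
    rfl
  map_mul' g h := by
    have : Φ ((g : F₂) * h) = Φ (g : F₂) * Φ (h : F₂) := map_mul _ _ _
    simp only [Subgroup.coe_mul, this, LG.mul_def, n_eq_zero g.2, T_zero, one_mul]
    rfl

lemma dw (m : ℤ) : d ⟨w m, w_mem m⟩ = Multiplicative.ofAdd (T m) := by
  simp [d, Φ_w]

lemma ker_not_fg : ¬ (σ.ker).FG := by
  intro hfg
  haveI : Group.FG σ.ker := (Group.fg_iff_subgroup_fg _).2 hfg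
  have hr : d.range.FG := (Group.fg_iff_subgroup_fg _).1 (Group.fg_range d)
  obtain ⟨S, hS, hfin⟩ := (Subgroup.fg_iff _).1 hr
  obtain ⟨E, hE⟩ := hfin.exists_finset_coe
  obtain ⟨m, hm⟩ : ∃ m : ℤ, m ∉ E.biUnion (fun x => (Multiplicative.toAdd x).coeff.support) :=
    Infinite.exists_notMem_finset _
  -- coefficient at m as a hom
  have cmul : ∀ x y : Multiplicative Rp,
      (Multiplicative.toAdd (x * y)).coeff m = (Multiplicative.toAdd x).coeff m + (Multiplicative.toAdd y).coeff m :=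
    fun x y => Finsupp.add_apply _ _ _
  let c : Multiplicative Rp →* Multiplicative ℤ :=
    { toFun := fun x => Multiplicative.ofAdd ((Multiplicative.toAdd x).coeff m)
      map_one' := by
        show Multiplicative.ofAdd ((0 : Rp).coeff m) = 1
        simp
      map_mul' := fun x y => by
        simp only [cmul x y]
        rfl }
  have hle : d.range ≤ c.ker := by
    rw [← hS]
    refine (Subgroup.closure_le _).2 ?_
    intro x hx
    have hxE : x ∈ E := by rwa [← hE] at hx
    have hsupp : m ∉ (Multiplicative.toAdd x).coeff.support := fun h =>
      hm (Finset.mem_biUnion.2 ⟨x, hxE, h⟩)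
    have : (Multiplicative.toAdd x).coeff m = 0 := Finsupp.notMem_support_iff.1 hsupp
    show c x = 1
    simp [c, this]
  have hmem : Multiplicative.ofAdd (T m : Rp) ∈ d.range := ⟨⟨w m, w_mem m⟩, dw m⟩
  have := hle hmem
  have : (Multiplicative.ofAdd ((T m : Rp).coeff m) : Multiplicative ℤ) = 1 := this
  simp [T_apply] at this

abbrev N : Subgroup F₂ := Subgroup.normalClosure {a}

noncomputable def τ : Multiplicative ℤ →* F₂ ⧸ N :=
  zpowersHom _ (QuotientGroup.mk' N b)

lemma key : τ.comp σ = QuotientGroup.mk' N := by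
  apply FreeGroup.ext_hom
  intro i
  fin_cases i
  · show τ (σ a) = QuotientGroup.mk' N a
    rw [σ_a, map_one, eq_comm, QuotientGroup.mk'_apply, QuotientGroup.eq_one_iff]
    exact Subgroup.subset_normalClosure (Set.mem_singleton a)
  · show τ (σ b) = QuotientGroup.mk' N b
    rw [σ_b]
    show QuotientGroup.mk' N b ^ (Multiplicative.toAdd (Multiplicative.ofAdd (1:ℤ))) = _
    simp

lemma ncl_eq_ker : Subgroup.normalClosure {a} = σ.ker := by
  apply le_antisymm
  · exact Subgroup.normalClosure_le_normal
      (by simp [Set.singleton_subset_iff, σ_a, MonoidHom.mem_ker])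
  · intro x hx
    have h1 : QuotientGroup.mk' N x = 1 := by
      rw [← key]
      show τ (σ x) = 1
      rw [hx, map_one]
    exact (QuotientGroup.eq_one_iff _).1 h1

noncomputable def ψ : F₂ →* F₂ × Multiplicative ℤ := (MonoidHom.id F₂).prod σ

lemma top_eq : (⊤ : Subgroup F₂) = closure {a, b} := by
  rw [← FreeGroup.closure_range_of (Fin 2)]
  congr 1
  ext x
  simp [Fin.exists_fin_two, a, b, eq_comm]

lemma K_eq : closure {(a, (1 : Multiplicative ℤ)), (b, Multiplicative.ofAdd (1 : ℤ))}
    = ψ.range := by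
  rw [MonoidHom.range_eq_map, top_eq, MonoidHom.map_closure]
  congr 1
  rw [Set.image_insert_eq, Set.image_singleton]
  have h1 : ψ a = (a, 1) := by simp [ψ, σ_a]
  have h2 : ψ b = (b, Multiplicative.ofAdd 1) := by simp [ψ, σ_b]
  rw [h1, h2]

lemma mem_range_ψ (x : F₂) (y : Multiplicative ℤ) :
    (x, y) ∈ ψ.range ↔ σ x = y := by
  constructor
  · rintro ⟨z, hz⟩
    obtain ⟨h1, h2⟩ := Prod.mk.injEq .. ▸ hz
    rw [← h2]
    simp only [ψ, MonoidHom.prod_apply, MonoidHom.id_apply] at h1 h2 ⊢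
    rw [h1]
  · intro h
    exact ⟨x, by simp [ψ, h]⟩

lemma inf_eq :
    ((⊤ : Subgroup F₂).prod ⊥) ⊓
        closure {(a, (1 : Multiplicative ℤ)), (b, Multiplicative.ofAdd (1 : ℤ))}
      = (Subgroup.normalClosure {a}).prod (⊥ : Subgroup (Multiplicative ℤ)) := by
  rw [K_eq, ncl_eq_ker]
  ext ⟨x, y⟩
  simp only [Subgroup.mem_inf, Subgroup.mem_prod, Subgroup.mem_top, Subgroup.mem_bot,
    true_and, mem_range_ψ, MonoidHom.mem_ker]
  constructor
  · rintro ⟨h1, h2⟩; exact ⟨h1 ▸ h2, h1⟩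
  · rintro ⟨h1, h2⟩; exact ⟨h2, h2 ▸ h1⟩

lemma H_fg : ((⊤ : Subgroup F₂).prod (⊥ : Subgroup (Multiplicative ℤ))).FG := by
  rw [Subgroup.fg_iff]
  refine ⟨{(a, 1), (b, 1)}, ?_, (Set.finite_singleton _).insert _⟩
  have : (⊤ : Subgroup F₂).prod (⊥ : Subgroup (Multiplicative ℤ))
      = Subgroup.map (MonoidHom.inl F₂ (Multiplicative ℤ)) ⊤ := by
    ext ⟨x, y⟩
    simp [Subgroup.mem_prod, Subgroup.mem_map, eq_comm, Prod.ext_iff]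
  rw [this, top_eq, MonoidHom.map_closure, Set.image_insert_eq, Set.image_singleton]
  rfl

lemma H_normal : ((⊤ : Subgroup F₂).prod (⊥ : Subgroup (Multiplicative ℤ))).Normal := by
  constructor
  rintro ⟨x, y⟩ hx ⟨g, h⟩
  simp only [Subgroup.mem_prod, Subgroup.mem_top, Subgroup.mem_bot, true_and] at hx ⊢
  simp [hx]

lemma inf_not_fg :
    ¬ (((⊤ : Subgroup F₂).prod ⊥) ⊓
        closure {(a, (1 : Multiplicative ℤ)), (b, Multiplicative.ofAdd (1 : ℤ))}).FG := by
  rw [inf_eq, ncl_eq_ker]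
  intro hfg
  apply ker_not_fg
  obtain ⟨S, hS, hfin⟩ := (Subgroup.fg_iff _).1 hfg
  have : σ.ker = Subgroup.map (MonoidHom.fst F₂ (Multiplicative ℤ)) (σ.ker.prod ⊥) := by
    ext x
    constructor
    · intro hx; exact ⟨(x, 1), by simp [Subgroup.mem_prod, hx]⟩
    · rintro ⟨⟨z, u⟩, hz, rfl⟩
      exact hz.1
  rw [Subgroup.fg_iff, this, ← hS, MonoidHom.map_closure]
  exact ⟨_, rfl, hfin.image _⟩

end F2Howson

/-- A group has the weakly Howson property if the intersection of any two finitely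
generated subgroups, one of which is normal, is finitely generated. -/
def WeaklyHowson (G : Type*) [Group G] : Prop :=
  ∀ H K : Subgroup G, H.Normal → H.FG → K.FG → (H ⊓ K).FG

/-- In `F₂ × ℤ = ⟨a, b⟩ × ⟨t⟩`, the subgroups `H = F₂ × 1` (finitely generated and normal)
and `K = ⟨(a, 0), (b, 1)⟩` (finitely generated) intersect in the normal closure of `a`
in `F₂`, which is not finitely generated.  Hence `F₂ × ℤ` is not weakly Howson. -/
theorem F2_prod_int_not_weakly_howson :
    letI F₂ := FreeGroup (Fin 2)
    letI a : F₂ := FreeGroup.of 0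
    letI b : F₂ := FreeGroup.of 1
    letI H : Subgroup (F₂ × Multiplicative ℤ) := (⊤ : Subgroup F₂).prod ⊥
    letI K : Subgroup (F₂ × Multiplicative ℤ) :=
      Subgroup.closure {(a, (1 : Multiplicative ℤ)), (b, Multiplicative.ofAdd (1 : ℤ))}
    H.Normal ∧ H.FG ∧ K.FG ∧
      H ⊓ K = (Subgroup.normalClosure {a}).prod (⊥ : Subgroup (Multiplicative ℤ)) ∧
      ¬ (H ⊓ K).FG ∧
      ¬ WeaklyHowson (F₂ × Multiplicative ℤ) := by
  refine ⟨F2Howson.H_normal, F2Howson.H_fg, ?_, F2Howson.inf_eq, F2Howson.inf_not_fg, ?_⟩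
  · rw [Subgroup.fg_iff]
    exact ⟨_, rfl, (Set.finite_singleton _).insert _⟩
  · intro hW
    exact F2Howson.inf_not_fg
      (hW _ _ F2Howson.H_normal F2Howson.H_fg
        ((Subgroup.fg_iff _).2 ⟨_, rfl, (Set.finite_singleton _).insert _⟩))
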